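/- Let f be a function from datasets to ℝ with global sensitivity Δf, and let A(D) = f(D) + η where η is a Laplace random variable with mean 0 and scale Δf/ε. Then for all neighboring datasets D, D' and all measurable sets S ⊆ ℝ, Pr[A(D) ∈ S] ≤ e^ε · Pr[A(D') ∈ S]; i.e., the Laplace mechanism is ε-differentially private. -/
import Mathlib


open MeasureTheory Real

/-- The Laplace distribution with mean 0 and scale `b`, given by the density
`(1/(2b)) exp (-|x|/b)` with respect to Lebesgue measure. -/
noncomputable def laplaceMeasure (b : ℝ) : Measure ℝ :=
  MeasureTheory.volume.withDensity fun x => ENNReal.ofReal ((2 * b)⁻¹ * Real.exp (-|x| / b))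

lemma laplaceMeasure_map_apply (b c : ℝ) (S : Set ℝ) (hS : MeasurableSet S) :
    (laplaceMeasure b).map (fun η => c + η) S
      = ∫⁻ x in S, ENNReal.ofReal ((2 * b)⁻¹ * Real.exp (-|x - c| / b)) := by
  set g : ℝ → ENNReal := fun x => (ENNReal.ofReal ((2 * b)⁻¹ * Real.exp (-|x| / b)) : ENNReal) with hg
  have hpre : MeasurableSet ((fun η => c + η) ⁻¹' S) := (measurable_const_add c) hS
  rw [Measure.map_apply (measurable_const_add c) hS, laplaceMeasure, withDensity_apply _ hpre]
  calc ∫⁻ x in (fun η => c + η) ⁻¹' S, g x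
      = ∫⁻ x, ((fun η => c + η) ⁻¹' S).indicator g x := (lintegral_indicator (hs := hpre) _).symm
    _ = ∫⁻ x, S.indicator (fun y => g (y - c)) (c + x) := by
        congr 1; funext x
        by_cases hx : c + x ∈ S <;>
          simp [Set.indicator, hx, Set.mem_preimage]
    _ = ∫⁻ y, S.indicator (fun y => g (y - c)) y := lintegral_add_left_eq_self _ c
    _ = ∫⁻ x in S, g (x - c) := lintegral_indicator (hs := hS) _

/-- The Laplace mechanism `A(D) = f(D) + η`, with `η ~ Lap(Δf/ε)`,
is ε-differentially private for a query `f` of global sensitivity `Δf`. -/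
theorem laplace_mechanism_dp {Dset : Type*} (Neighbor : Dset → Dset → Prop)
    (f : Dset → ℝ) (Δf ε : ℝ) (hΔ : 0 < Δf) (hε : 0 < ε)
    (hsens : ∀ D D', Neighbor D D' → |f D - f D'| ≤ Δf)
    (A : Dset → Measure ℝ)
    (hA : ∀ D, A D = (laplaceMeasure (Δf / ε)).map (fun η => f D + η))
    (D D' : Dset) (hDD' : Neighbor D D')
    (S : Set ℝ) (hS : MeasurableSet S) :
    A D S ≤ ENNReal.ofReal (Real.exp ε) * A D' S := by
  set b := Δf / ε with hbdef
  have hb : 0 < b := div_pos hΔ hε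
  rw [hA, hA, laplaceMeasure_map_apply b (f D) S hS, laplaceMeasure_map_apply b (f D') S hS,
    ← lintegral_const_mul' _ _ ENNReal.ofReal_ne_top]
  refine lintegral_mono fun x => ?_
  rw [← ENNReal.ofReal_mul (Real.exp_nonneg ε)]
  refine ENNReal.ofReal_le_ofReal ?_
  rw [mul_left_comm]
  refine mul_le_mul_of_nonneg_left ?_ (by positivity)
  rw [← Real.exp_add]
  refine Real.exp_le_exp.mpr ?_
  have h1 : |x - f D'| - |x - f D| ≤ Δf := by
    have h2 : |x - f D'| - |x - f D| ≤ |(x - f D') - (x - f D)| :=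
      abs_sub_abs_le_abs_sub _ _
    have h3 : |(x - f D') - (x - f D)| = |f D - f D'| := by
      rw [show (x - f D') - (x - f D) = f D - f D' by ring]
    linarith [hsens D D' hDD']
  have key : (|x - f D'| - |x - f D|) / b ≤ Δf / b := by gcongr
  have hΔb : Δf / b = ε := by rw [hbdef]; field_simp
  rw [sub_div, hΔb] at key
  linarith [key, neg_div b (|x - f D|), neg_div b (|x - f D'|)]
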